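/- Let p be prime, g a primitive root mod p, b ∈ (ℤ/pℤ)^* and k, ℓ integers. Define P(k,ℓ) = (1/(p(p−1)²))·|∑_{x ∈ (ℤ/pℤ)^*} ω_{p-1}^{k·log_g x} ω_p^{-ℓxb}|². Then P(0,0) = 1/p, P(0,ℓ) = 1/(p(p−1)²) for ℓ ≢ 0 mod p, P(k,0) = 0 for k ≢ 0 mod (p−1), and P(k,ℓ) = 1/(p−1)² for k ≢ 0 mod (p−1) and ℓ ≢ 0 mod p. In particular P(k,ℓ) does not depend on b. -/

import Mathlib

open Complex Finset

noncomputable def eN (N : ℕ) (n : ℤ) : ℂ :=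
  Complex.exp (2 * Real.pi * Complex.I * n / N)

lemma eN_add (N : ℕ) (m n : ℤ) : eN N (m + n) = eN N m * eN N n := by
  rw [eN, eN, eN, ← Complex.exp_add]
  congr 1
  push_cast
  ring

lemma eN_zero (N : ℕ) : eN N 0 = 1 := by simp [eN]

lemma eN_mul_self (N : ℕ) (hN : N ≠ 0) (c : ℤ) : eN N ((N : ℤ) * c) = 1 := by
  rw [eN]
  have hN' : (N : ℂ) ≠ 0 := Nat.cast_ne_zero.mpr hN
  have : 2 * (Real.pi : ℂ) * Complex.I * ((N : ℤ) * c : ℤ) / N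
      = (c : ℤ) * (2 * Real.pi * Complex.I) := by
    push_cast
    field_simp
  rw [this, Complex.exp_int_mul_two_pi_mul_I]

lemma eN_congr (N : ℕ) (hN : N ≠ 0) {m n : ℤ} (h : (N : ℤ) ∣ m - n) : eN N m = eN N n := by
  obtain ⟨c, hc⟩ := h
  have hm : m = n + (N : ℤ) * c := by linarith
  rw [hm, eN_add, eN_mul_self N hN, mul_one]

lemma eN_pow (N : ℕ) (n : ℤ) (t : ℕ) : eN N n ^ t = eN N (n * t) := by
  rw [eN, eN, ← Complex.exp_nat_mul]
  congr 1
  push_cast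
  ring

lemma eN_eq_one_iff (N : ℕ) (hN : N ≠ 0) (n : ℤ) : eN N n = 1 ↔ (N : ℤ) ∣ n := by
  constructor
  · intro h
    rw [eN, Complex.exp_eq_one_iff] at h
    obtain ⟨m, hm⟩ := h
    have hN' : (N : ℂ) ≠ 0 := Nat.cast_ne_zero.mpr hN
    have hpi : (2 : ℂ) * Real.pi * Complex.I ≠ 0 := by
      simp [Real.pi_ne_zero, Complex.I_ne_zero]
    have hnm : (n : ℂ) = (m : ℂ) * N := by
      field_simp at hm
      have h2 : (n : ℂ) * (2 * Real.pi * Complex.I) = (m : ℂ) * N * (2 * Real.pi * Complex.I) := by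
        linear_combination (2 * Real.pi * Complex.I) * hm
      exact mul_right_cancel₀ hpi h2
    have hn : n = m * N := by exact_mod_cast hnm
    exact ⟨m, by linarith [hn]⟩
  · intro h
    have := eN_congr N hN (by simpa using h : (N:ℤ) ∣ n - 0)
    simpa [eN_zero] using this

lemma eN_conj (N : ℕ) (n : ℤ) : (starRingEnd ℂ) (eN N n) = eN N (-n) := by
  rw [eN, eN, ← Complex.exp_conj]
  congr 1
  simp only [map_mul, map_div₀, map_ofNat, Complex.conj_I, map_natCast, map_intCast,
    Complex.conj_ofReal, neg_mul, mul_neg, Int.cast_neg]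

lemma sum_zmod_eq_range (N : ℕ) [NeZero N] (f : ZMod N → ℂ) :
    ∑ t : ZMod N, f t = ∑ t ∈ Finset.range N, f (t : ZMod N) := by
  refine Finset.sum_nbij' (fun t => t.val) (fun t => (t : ZMod N)) ?_ ?_ ?_ ?_ ?_
  · intro a _; exact Finset.mem_range.mpr (ZMod.val_lt a)
  · intro a _; exact Finset.mem_univ _
  · intro a _; exact ZMod.natCast_rightInverse a
  · intro a ha; exact ZMod.val_cast_of_lt (Finset.mem_range.mp ha)
  · intro a _; rw [ZMod.natCast_rightInverse a]

lemma sum_eN (N : ℕ) [NeZero N] (k : ℤ) :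
    ∑ t : ZMod N, eN N (k * ((t.val : ℕ) : ℤ)) = if (N : ℤ) ∣ k then (N : ℂ) else 0 := by
  have hN : N ≠ 0 := NeZero.ne N
  rw [sum_zmod_eq_range N]
  have hval : ∀ t ∈ Finset.range N, eN N (k * (((t : ZMod N).val : ℕ) : ℤ)) = eN N k ^ t := by
    intro t ht
    rw [ZMod.val_cast_of_lt (Finset.mem_range.mp ht), eN_pow]
  rw [Finset.sum_congr rfl hval]
  by_cases hdvd : (N : ℤ) ∣ k
  · rw [if_pos hdvd]
    have h1 : eN N k = 1 := (eN_eq_one_iff N hN k).mpr hdvd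
    simp [h1]
  · rw [if_neg hdvd]
    have h1 : eN N k ≠ 1 := fun h => hdvd ((eN_eq_one_iff N hN k).mp h)
    rw [geom_sum_eq h1]
    have hNk : eN N k ^ N = 1 := by
      rw [eN_pow]
      exact (eN_eq_one_iff N hN _).mpr ⟨k, by ring⟩
    rw [hNk]
    simp

noncomputable def Psi (N : ℕ) (x : ZMod N) : ℂ := eN N ((x.val : ℕ) : ℤ)

lemma Psi_intCast (N : ℕ) [NeZero N] (m : ℤ) : Psi N ((m : ZMod N)) = eN N m := by
  apply eN_congr N (NeZero.ne N)
  have h := ZMod.val_intCast (n := N) m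
  exact ⟨-(m / N), by rw [h]; have := Int.mul_ediv_add_emod m N; linarith⟩

lemma Psi_add (N : ℕ) [NeZero N] (x y : ZMod N) : Psi N (x + y) = Psi N x * Psi N y := by
  have h1 : Psi N (x + y) = eN N ((x.val : ℤ) + (y.val : ℤ)) := by
    apply eN_congr N (NeZero.ne N)
    have h := ZMod.val_add x y
    have h2 := Nat.div_add_mod (x.val + y.val) N
    exact ⟨-(((x.val + y.val) / N : ℕ) : ℤ), by push_cast [h]; push_cast at h2; linarith⟩
  rw [h1, eN_add]; rfl

lemma Psi_zero (N : ℕ) [NeZero N] : Psi N 0 = 1 := by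
  have : Psi N ((0 : ℤ) : ZMod N) = eN N 0 := Psi_intCast N 0
  simpa [eN_zero] using this

lemma Psi_conj (N : ℕ) [NeZero N] (x : ZMod N) :
    (starRingEnd ℂ) (Psi N x) = Psi N (-x) := by
  rw [Psi, eN_conj]
  rw [show (-(x.val : ℤ)) = ((- (x.val : ℤ) : ℤ)) from rfl]
  rw [← Psi_intCast N (-(x.val : ℤ))]
  congr 1
  push_cast
  simp [ZMod.natCast_val, ZMod.cast_id]

lemma sum_units_psi (p : ℕ) [Fact p.Prime] (c : ZMod p) :
    ∑ x : (ZMod p)ˣ, Psi p (c * (x : ZMod p)) =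
      if c = 0 then ((p : ℂ) - 1) else -1 := by
  have hp2 : 2 ≤ p := (Fact.out : p.Prime).two_le
  haveI : NeZero p := ⟨by omega⟩
  by_cases hc : c = 0
  · rw [if_pos hc]
    simp only [hc, zero_mul, Psi_zero]
    rw [Finset.sum_const, Finset.card_univ, ZMod.card_units_eq_totient,
      Nat.totient_prime (Fact.out : p.Prime), nsmul_eq_mul, mul_one]
    push_cast [Nat.cast_sub (by omega : 1 ≤ p)]
    ring
  · rw [if_neg hc]
    obtain ⟨cu, hcu⟩ := (isUnit_iff_ne_zero.mpr hc)
    have h1 : ∑ x : (ZMod p)ˣ, Psi p (c * (x : ZMod p)) = ∑ x : (ZMod p)ˣ, Psi p ((x : ZMod p)) := by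
      rw [← Fintype.sum_equiv (Equiv.mulLeft cu) _ (fun x => Psi p ((x : ZMod p)))]
      intro x
      simp [← hcu]
    rw [h1]
    have h2 : ∑ x : (ZMod p)ˣ, Psi p ((x : ZMod p)) = ∑ y ∈ Finset.univ.erase (0 : ZMod p), Psi p y := by
      refine Finset.sum_nbij' (fun x => (x : ZMod p))
        (fun y => if h : y = 0 then 1 else (Units.mk0 y h)) ?_ ?_ ?_ ?_ ?_
      · intro a _; exact Finset.mem_erase.mpr ⟨a.ne_zero, Finset.mem_univ _⟩
      · intro a _; exact Finset.mem_univ _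
      · intro a _; simp [a.ne_zero]
      · intro a ha; simp [Finset.mem_erase.mp ha |>.1]
      · intro a _; rfl
    rw [h2]
    have h3 : ∑ y : ZMod p, Psi p y = 0 := by
      have := sum_eN p 1
      rw [if_neg (by intro h; have := Int.le_of_dvd one_pos h; omega)] at this
      simpa [Psi] using this
    have h4 := Finset.add_sum_erase Finset.univ (fun y => Psi p y) (Finset.mem_univ (0 : ZMod p))
    rw [h3] at h4
    simp only [Psi_zero] at h4
    linear_combination h4

noncomputable def Fterm (p : ℕ) (g b : (ZMod p)ˣ) (k ℓ : ℤ) (t : ZMod (p-1)) : ℂ :=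
  eN (p-1) (k * t.val) * Psi p ((-(ℓ : ZMod p)) * ((g ^ t.val * b : (ZMod p)ˣ) : ZMod p))

lemma sum_eq_Fterm (p : ℕ) [hp : Fact p.Prime] [NeZero (p-1)] (g b : (ZMod p)ˣ) (k ℓ : ℤ) :
    (∑ t ∈ Finset.range (p - 1),
        Complex.exp (2 * Real.pi * Complex.I * (k : ℂ) * (t : ℂ) / ((p : ℂ) - 1)) *
          Complex.exp (-(2 * Real.pi * Complex.I * (ℓ : ℂ) *
            (((((g ^ t * b : (ZMod p)ˣ) : ZMod p)).val : ℕ) : ℂ) / (p : ℂ)))) =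
      ∑ t : ZMod (p - 1), Fterm p g b k ℓ t := by
  have hp2 : 2 ≤ p := (Fact.out : p.Prime).two_le
  haveI : NeZero p := ⟨by omega⟩
  rw [sum_zmod_eq_range (p - 1) (Fterm p g b k ℓ)]
  refine (Finset.sum_congr rfl fun t ht => ?_).symm
  have htlt : t < p - 1 := Finset.mem_range.mp ht
  have hval : ((t : ZMod (p - 1))).val = t := ZMod.val_cast_of_lt htlt
  rw [Fterm, hval]
  have hpc : ((p - 1 : ℕ) : ℂ) = (p : ℂ) - 1 := by
    push_cast [Nat.cast_sub (by omega : 1 ≤ p)]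
    ring
  congr 1
  · rw [eN]
    congr 1
    rw [hpc]
    push_cast
    ring
  · set v : ℕ := (((g ^ t * b : (ZMod p)ˣ) : ZMod p)).val with hv
    have h1 : Complex.exp (-(2 * Real.pi * Complex.I * (ℓ : ℂ) * (v : ℂ) / (p : ℂ)))
        = eN p (-(ℓ * v)) := by
      rw [eN]
      congr 1
      push_cast
      ring
    rw [h1, ← Psi_intCast p (-(ℓ * v))]
    congr 1
    push_cast
    rw [ZMod.natCast_val, ZMod.cast_id]
    simp only [Units.val_mul, Units.val_pow_eq_pow_val]
    ring

lemma sum_Fterm_of_dvd (p : ℕ) [hp : Fact p.Prime] [NeZero (p-1)] (g b : (ZMod p)ˣ) (k ℓ : ℤ)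
    (hl : (p : ℤ) ∣ ℓ) :
    ∑ t : ZMod (p - 1), Fterm p g b k ℓ t =
      if ((p - 1 : ℕ) : ℤ) ∣ k then ((p - 1 : ℕ) : ℂ) else 0 := by
  have hp2 : 2 ≤ p := (Fact.out : p.Prime).two_le
  haveI : NeZero p := ⟨by omega⟩
  have hl0 : (ℓ : ZMod p) = 0 := (ZMod.intCast_zmod_eq_zero_iff_dvd ℓ p).mpr hl
  have : ∀ t : ZMod (p - 1), Fterm p g b k ℓ t = eN (p - 1) (k * t.val) := by
    intro t
    rw [Fterm, hl0]
    simp [Psi_zero]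
  rw [Finset.sum_congr rfl (fun t _ => this t)]
  exact sum_eN (p - 1) k

lemma Fterm_mul_conj_sum (p : ℕ) [hp : Fact p.Prime] [NeZero (p-1)] (g : (ZMod p)ˣ)
    (horder : orderOf g = p - 1) (b : (ZMod p)ˣ) (k ℓ : ℤ) (hl : ¬ (p : ℤ) ∣ ℓ) :
    (∑ t : ZMod (p-1), Fterm p g b k ℓ t) *
        (starRingEnd ℂ) (∑ t : ZMod (p-1), Fterm p g b k ℓ t)
      = (p : ℂ) - (if ((p - 1 : ℕ) : ℤ) ∣ k then ((p : ℂ) - 1) else 0) := by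
  have hp2 : 2 ≤ p := (Fact.out : p.Prime).two_le
  haveI : NeZero p := ⟨by omega⟩
  have hq0 : p - 1 ≠ 0 := NeZero.ne _
  have hgq : g ^ (p - 1) = 1 := by rw [← horder]; exact pow_orderOf_eq_one g
  have hvq : ∀ s u : ZMod (p-1), ((p-1 : ℕ) : ℤ) ∣ ((((s+u : ZMod (p-1))).val : ℤ) - s.val - u.val) := by
    intro s u
    have h : ((s+u : ZMod (p-1))).val = (s.val + u.val) % (p-1) := ZMod.val_add s u
    have h2 := Nat.div_add_mod (s.val + u.val) (p-1)
    refine ⟨-(((s.val + u.val) / (p-1) : ℕ) : ℤ), ?_⟩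
    have h2' : ((p-1:ℕ):ℤ) * (((s.val+u.val)/(p-1) : ℕ) : ℤ) + (((s.val+u.val) % (p-1) : ℕ) : ℤ)
        = (s.val : ℤ) + u.val := by exact_mod_cast congrArg (Nat.cast : ℕ → ℤ) h2
    have h' : (((s+u : ZMod (p-1))).val : ℤ) = (((s.val+u.val) % (p-1) : ℕ) : ℤ) := by
      exact_mod_cast congrArg (Nat.cast : ℕ → ℤ) h
    rw [h']
    linarith
  have hGadd : ∀ s u : ZMod (p-1), g ^ ((s+u : ZMod (p-1))).val = g ^ s.val * g ^ u.val := by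
    intro s u
    rw [← pow_add, ZMod.val_add, ← pow_eq_pow_mod _ hgq]
  have hGbij : Function.Bijective (fun s : ZMod (p-1) => g ^ s.val) := by
    rw [Fintype.bijective_iff_injective_and_card]
    constructor
    · intro s u h
      simp only at h
      have hm := pow_eq_pow_iff_modEq.mp h
      rw [horder] at hm
      have hs := ZMod.val_lt s
      have hu := ZMod.val_lt u
      have : s.val = u.val := by
        have := hm
        unfold Nat.ModEq at this
        rwa [Nat.mod_eq_of_lt hs, Nat.mod_eq_of_lt hu] at this
      exact ZMod.val_injective _ this
    · rw [ZMod.card, ZMod.card_units_eq_totient, Nat.totient_prime (Fact.out : p.Prime)]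
  have hl0 : (ℓ : ZMod p) ≠ 0 := fun h => hl ((ZMod.intCast_zmod_eq_zero_iff_dvd ℓ p).mp h)
  set c : ZMod (p-1) → ZMod p :=
    fun u => (-(ℓ : ZMod p) * (b : ZMod p)) * (((g ^ u.val : (ZMod p)ˣ) : ZMod p) - 1) with hc
  have key : ∀ u s : ZMod (p-1),
      Fterm p g b k ℓ (s + u) * (starRingEnd ℂ) (Fterm p g b k ℓ s)
        = eN (p-1) (k * u.val) * Psi p (c u * ((g ^ s.val : (ZMod p)ˣ) : ZMod p)) := by
    intro u s
    rw [Fterm, Fterm, map_mul, eN_conj, Psi_conj, mul_mul_mul_comm, ← eN_add, ← Psi_add]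
    congr 1
    · apply eN_congr _ hq0
      have h2 : (k * (((s+u : ZMod (p-1))).val : ℤ) + -(k * (s.val : ℤ))) - k * (u.val : ℤ)
          = k * ((((s+u : ZMod (p-1))).val : ℤ) - s.val - u.val) := by ring
      rw [h2]
      exact Dvd.dvd.mul_left (hvq s u) k
    · congr 1
      rw [hGadd s u, hc]
      simp only [Units.val_mul]
      ring
  have hc0 : ∀ u : ZMod (p-1), (c u = 0) ↔ (u = 0) := by
    intro u
    rw [hc]
    simp only [mul_eq_zero, neg_eq_zero, sub_eq_zero]
    constructor
    · rintro ((h | h) | h)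
      · exact absurd h hl0
      · exact absurd h b.ne_zero
      · have : (g ^ u.val : (ZMod p)ˣ) = 1 := Units.ext (by simpa using h)
        have hdvd : orderOf g ∣ u.val := orderOf_dvd_of_pow_eq_one this
        rw [horder] at hdvd
        have := ZMod.val_lt u
        have hval0 : u.val = 0 := Nat.eq_zero_of_dvd_of_lt hdvd this
        exact (ZMod.val_eq_zero u).mp hval0
    · intro h
      subst h
      right
      simp [ZMod.val_zero]
  calc (∑ t : ZMod (p-1), Fterm p g b k ℓ t) *
        (starRingEnd ℂ) (∑ t : ZMod (p-1), Fterm p g b k ℓ t)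
      = ∑ t : ZMod (p-1), ∑ s : ZMod (p-1),
          Fterm p g b k ℓ t * (starRingEnd ℂ) (Fterm p g b k ℓ s) := by
        rw [map_sum, Finset.sum_mul_sum]
    _ = ∑ s : ZMod (p-1), ∑ t : ZMod (p-1),
          Fterm p g b k ℓ t * (starRingEnd ℂ) (Fterm p g b k ℓ s) := Finset.sum_comm
    _ = ∑ s : ZMod (p-1), ∑ u : ZMod (p-1),
          Fterm p g b k ℓ (s + u) * (starRingEnd ℂ) (Fterm p g b k ℓ s) := by
        refine Finset.sum_congr rfl fun s _ => ?_
        exact (Fintype.sum_equiv (Equiv.addLeft s)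
          (fun u => Fterm p g b k ℓ (s + u) * (starRingEnd ℂ) (Fterm p g b k ℓ s))
          (fun t => Fterm p g b k ℓ t * (starRingEnd ℂ) (Fterm p g b k ℓ s))
          (fun u => rfl)).symm
    _ = ∑ u : ZMod (p-1), ∑ s : ZMod (p-1),
          Fterm p g b k ℓ (s + u) * (starRingEnd ℂ) (Fterm p g b k ℓ s) := Finset.sum_comm
    _ = ∑ u : ZMod (p-1), eN (p-1) (k * u.val) * ∑ x : (ZMod p)ˣ, Psi p (c u * (x : ZMod p)) := by
        refine Finset.sum_congr rfl fun u _ => ?_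
        rw [Finset.sum_congr rfl (fun s _ => key u s), ← Finset.mul_sum]
        congr 1
        exact hGbij.sum_comp (fun x => Psi p (c u * (x : ZMod p)))
    _ = ∑ u : ZMod (p-1), eN (p-1) (k * u.val) * (if u = 0 then ((p:ℂ)-1) else -1) := by
        refine Finset.sum_congr rfl fun u _ => ?_
        rw [sum_units_psi p (c u)]
        exact congrArg _ (if_congr (hc0 u) rfl rfl)
    _ = ∑ u : ZMod (p-1), (-(eN (p-1) (k * u.val)) + if u = 0 then (p:ℂ) else 0) := by
        refine Finset.sum_congr rfl fun u _ => ?_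
        by_cases hu : u = 0
        · subst hu
          rw [if_pos rfl, if_pos rfl, ZMod.val_zero]
          push_cast
          rw [mul_zero, eN_zero]
          ring
        · rw [if_neg hu, if_neg hu]
          ring
    _ = (p : ℂ) - (if ((p - 1 : ℕ) : ℤ) ∣ k then ((p : ℂ) - 1) else 0) := by
        rw [Finset.sum_add_distrib, Finset.sum_neg_distrib, sum_eN (p-1) k,
          Finset.sum_ite_eq' Finset.univ (0 : ZMod (p-1)) (fun _ => (p:ℂ))]
        rw [if_pos (Finset.mem_univ _)]
        have hpc : ((p - 1 : ℕ) : ℂ) = (p : ℂ) - 1 := by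
          push_cast [Nat.cast_sub (by omega : 1 ≤ p)]
          ring
        by_cases hdvd : ((p-1:ℕ):ℤ) ∣ k
        · rw [if_pos hdvd, if_pos hdvd, hpc]
          ring
        · rw [if_neg hdvd, if_neg hdvd]
          ring


/-- Abelian Fourier sampling probabilities for the hidden conjugate `H^b` in the affine
group, treated as `ℤ_{p-1} × ℤ_p`:  with `g` a primitive root mod `p`, `b ∈ (ℤ/pℤ)ˣ`, and
`P(k,ℓ) = (1/(p(p-1)²))·|∑_{t=0}^{p-2} ω_{p-1}^{kt}·ω_p^{-ℓ·gᵗ·b}|²` (i.e. the sum over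
`x = gᵗ ∈ (ℤ/pℤ)ˣ` of `ω_{p-1}^{k·log_g x}·ω_p^{-ℓxb}`), one has `P(0,0) = 1/p`,
`P(0,ℓ) = 1/(p(p-1)²)` for `ℓ ≢ 0 (mod p)`, `P(k,0) = 0` for `k ≢ 0 (mod p-1)`, and
`P(k,ℓ) = 1/(p-1)²` otherwise; in particular `P` does not depend on `b`. -/
theorem stmt_16 (p : ℕ) (hp : Fact p.Prime) (g : (ZMod p)ˣ)
    (hg : ∀ x : (ZMod p)ˣ, x ∈ Subgroup.zpowers g)
    (P : (ZMod p)ˣ → ℤ → ℤ → ℝ)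
    (hP : ∀ (b : (ZMod p)ˣ) (k ℓ : ℤ), P b k ℓ =
      1 / ((p : ℝ) * ((p : ℝ) - 1) ^ 2) * ‖(∑ t ∈ Finset.range (p - 1),
        Complex.exp (2 * Real.pi * Complex.I * (k : ℂ) * (t : ℂ) / ((p : ℂ) - 1)) *
          Complex.exp (-(2 * Real.pi * Complex.I * (ℓ : ℂ) *
            (((((g ^ t * b : (ZMod p)ˣ) : ZMod p)).val : ℕ) : ℂ) / (p : ℂ))))‖ ^ 2) :
    (∀ (b : (ZMod p)ˣ) (k ℓ : ℤ), ((p : ℤ) - 1) ∣ k → (p : ℤ) ∣ ℓ →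
        P b k ℓ = 1 / p) ∧
    (∀ (b : (ZMod p)ˣ) (k ℓ : ℤ), ((p : ℤ) - 1) ∣ k → ¬ (p : ℤ) ∣ ℓ →
        P b k ℓ = 1 / ((p : ℝ) * ((p : ℝ) - 1) ^ 2)) ∧
    (∀ (b : (ZMod p)ˣ) (k ℓ : ℤ), ¬ ((p : ℤ) - 1) ∣ k → (p : ℤ) ∣ ℓ →
        P b k ℓ = 0) ∧
    (∀ (b : (ZMod p)ˣ) (k ℓ : ℤ), ¬ ((p : ℤ) - 1) ∣ k → ¬ (p : ℤ) ∣ ℓ →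
        P b k ℓ = 1 / ((p : ℝ) - 1) ^ 2) ∧
    (∀ (b b' : (ZMod p)ˣ) (k ℓ : ℤ), P b k ℓ = P b' k ℓ) := by
  have hprime : p.Prime := hp.out
  have hp2 : 2 ≤ p := hprime.two_le
  haveI : NeZero (p-1) := ⟨by omega⟩
  haveI : NeZero p := ⟨by omega⟩
  have horder : orderOf g = p - 1 := by
    rw [orderOf_eq_card_of_forall_mem_zpowers hg, Nat.card_eq_fintype_card, ZMod.card_units_eq_totient,
      Nat.totient_prime hprime]
  have hcast : ((p-1:ℕ):ℤ) = (p:ℤ) - 1 := by omega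
  have hpR : (p:ℝ) ≠ 0 := by positivity
  have h2R : (2:ℝ) ≤ (p:ℝ) := by exact_mod_cast hp2
  have hp1R : (p:ℝ) - 1 ≠ 0 := by linarith
  have h1cast : ((p-1:ℕ):ℝ) = (p:ℝ) - 1 := by push_cast [Nat.cast_sub (by omega : 1 ≤ p)]; ring
  have c1 : ∀ (b : (ZMod p)ˣ) (k ℓ : ℤ), ((p : ℤ) - 1) ∣ k → (p : ℤ) ∣ ℓ →
      P b k ℓ = 1 / p := by
    intro b k ℓ hk hl
    rw [hP, sum_eq_Fterm, sum_Fterm_of_dvd p g b k ℓ hl, if_pos (hcast ▸ hk)]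
    rw [Complex.norm_natCast, h1cast]
    field_simp
  have c3 : ∀ (b : (ZMod p)ˣ) (k ℓ : ℤ), ¬ ((p : ℤ) - 1) ∣ k → (p : ℤ) ∣ ℓ →
      P b k ℓ = 0 := by
    intro b k ℓ hk hl
    rw [hP, sum_eq_Fterm, sum_Fterm_of_dvd p g b k ℓ hl, if_neg (hcast ▸ hk)]
    simp
  have c2 : ∀ (b : (ZMod p)ˣ) (k ℓ : ℤ), ((p : ℤ) - 1) ∣ k → ¬ (p : ℤ) ∣ ℓ →
      P b k ℓ = 1 / ((p : ℝ) * ((p : ℝ) - 1) ^ 2) := by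
    intro b k ℓ hk hl
    rw [hP, sum_eq_Fterm]
    have hTT := Fterm_mul_conj_sum p g horder b k ℓ hl
    rw [if_pos (hcast ▸ hk)] at hTT
    set T := ∑ t : ZMod (p-1), Fterm p g b k ℓ t with hT
    have hnorm : ((Complex.normSq T : ℝ) : ℂ) = ((1:ℝ):ℂ) := by
      rw [← Complex.mul_conj, hTT]
      push_cast
      ring
    have hnorm' : Complex.normSq T = 1 := by exact_mod_cast hnorm
    rw [Complex.sq_norm, hnorm', mul_one]
  have c4 : ∀ (b : (ZMod p)ˣ) (k ℓ : ℤ), ¬ ((p : ℤ) - 1) ∣ k → ¬ (p : ℤ) ∣ ℓ →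
      P b k ℓ = 1 / ((p : ℝ) - 1) ^ 2 := by
    intro b k ℓ hk hl
    rw [hP, sum_eq_Fterm]
    have hTT := Fterm_mul_conj_sum p g horder b k ℓ hl
    rw [if_neg (hcast ▸ hk)] at hTT
    set T := ∑ t : ZMod (p-1), Fterm p g b k ℓ t with hT
    have hnorm : ((Complex.normSq T : ℝ) : ℂ) = (((p:ℝ)):ℂ) := by
      rw [← Complex.mul_conj, hTT]
      push_cast
      ring
    have hnorm' : Complex.normSq T = (p:ℝ) := by exact_mod_cast hnorm
    rw [Complex.sq_norm, hnorm']
    field_simp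
  refine ⟨c1, c2, c3, c4, fun b b' k ℓ => ?_⟩
  by_cases hk : ((p:ℤ) - 1) ∣ k <;> by_cases hl : (p:ℤ) ∣ ℓ
  · rw [c1 b k ℓ hk hl, c1 b' k ℓ hk hl]
  · rw [c2 b k ℓ hk hl, c2 b' k ℓ hk hl]
  · rw [c3 b k ℓ hk hl, c3 b' k ℓ hk hl]
  · rw [c4 b k ℓ hk hl, c4 b' k ℓ hk hl]
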